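/- For every normalized fully binary string s of length n (a string over {0,1} containing both symbols, with no two adjacent symbols equal), the flip grouping distance satisfies d_g(s) = n − 2. -/

import Mathlib

/-- Prefix reversal (flip) of the first `i` symbols of `s`. -/
def pflip (i : ℕ) (s : List ℕ) : List ℕ := (s.take i).reverse ++ s.drop i

/-- One flip step: `t` is obtained from `s` by some flip `f^(i)` with `1 ≤ i ≤ |s|`. -/
def FlipStep (s t : List ℕ) : Prop := ∃ i, 1 ≤ i ∧ i ≤ s.length ∧ t = pflip i s

/-- `ReachIn m s t`: `t` can be obtained from `s` by exactly `m` flips. -/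
def ReachIn : ℕ → List ℕ → List ℕ → Prop
  | 0 => fun s t => s = t
  | (m+1) => fun s t => ∃ u, FlipStep s u ∧ ReachIn m u t

/-- Flip distance: minimum number of flips transforming `s` into `t`. -/
noncomputable def flipDist (s t : List ℕ) : ℕ := sInf {m | ReachIn m s t}

/-- Two strings are compatible if every symbol occurs equally often in both. -/
def Compatible (s t : List ℕ) : Prop := ∀ a, s.count a = t.count a

/-- A string is fully `k`-ary if the set of symbols occurring in it is exactly `{0,…,k-1}`. -/
def FullyKary (k : ℕ) (s : List ℕ) : Prop := ∀ a, a ∈ s ↔ a < k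

/-- A string is normalized if no two adjacent symbols are equal. -/
def Normalized (s : List ℕ) : Prop := s.Chain' (· ≠ ·)

/-- A string is grouped if the occurrences of each symbol are consecutive. -/
def Grouped (s : List ℕ) : Prop :=
  ∀ i j l : Fin s.length, i < j → j < l → s.get i = s.get l → s.get j = s.get i

/-- Flip grouping distance: minimum number of flips transforming `s` into some grouped string. -/
noncomputable def groupDist (s : List ℕ) : ℕ := sInf {m | ∃ t, Grouped t ∧ ReachIn m s t}

/-- Flip sorting distance: flip distance from `s` to its non-descending rearrangement `I(s)`. -/
noncomputable def sortDist (s : List ℕ) : ℕ := flipDist s (s.insertionSort (· ≤ ·))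

/-- `rep w m` is the concatenation of `m` copies of the string `w`. -/
def rep (w : List ℕ) (m : ℕ) : List ℕ := (List.replicate m w).flatten

/-- number of breakpoints (unequal adjacent pairs) -/
def bp : List ℕ → ℕ
  | a :: b :: t => bp (b :: t) + (if a = b then 0 else 1)
  | _ => 0

@[simp] theorem bp_nil : bp [] = 0 := rfl
@[simp] theorem bp_single (a : ℕ) : bp [a] = 0 := rfl
theorem bp_cons_cons (a b : ℕ) (t : List ℕ) :
    bp (a :: b :: t) = bp (b :: t) + (if a = b then 0 else 1) := rfl

theorem bp_snoc : ∀ (l : List ℕ) (a : ℕ),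
    bp (l ++ [a]) = bp l + (l.getLast?.elim 0 (fun b => if b = a then 0 else 1))
  | [], a => by simp
  | [x], a => by simp [bp_cons_cons]
  | x :: y :: l, a => by
    have := bp_snoc (y :: l) a
    simp only [List.cons_append, bp_cons_cons] at *
    rw [this]
    simp [List.getLast?_cons_cons]
    omega

theorem bp_cons (a : ℕ) (l : List ℕ) :
    bp (a :: l) = bp l + (l.head?.elim 0 (fun b => if b = a then 0 else 1)) := by
  cases l with
  | nil => simp
  | cons b l' => simp [bp_cons_cons, eq_comm]

theorem bp_reverse : ∀ l : List ℕ, bp l.reverse = bp l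
  | [] => rfl
  | a :: l => by
    rw [List.reverse_cons, bp_snoc, bp_reverse l, List.getLast?_reverse, bp_cons]

theorem bp_le_append : ∀ (u v : List ℕ), bp u + bp v ≤ bp (u ++ v)
  | [], v => by simp
  | [x], v => by
    cases v with
    | nil => simp
    | cons c v' => simp [bp_cons_cons]
  | x :: y :: u, v => by
    have := bp_le_append (y :: u) v
    simp only [List.cons_append, bp_cons_cons] at *
    omega

theorem bp_append_le : ∀ (u v : List ℕ), bp (u ++ v) ≤ bp u + bp v + 1
  | [], v => by simp
  | [x], v => by
    cases v with
    | nil => simp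
    | cons c v' => simp [bp_cons_cons]; split <;> omega
  | x :: y :: u, v => by
    have := bp_append_le (y :: u) v
    simp only [List.cons_append, bp_cons_cons] at *
    omega

theorem bp_rep_cons : ∀ (m : ℕ) (a c : ℕ) (l : List ℕ),
    bp (List.replicate (m+1) a ++ c :: l) = bp (c :: l) + (if a = c then 0 else 1)
  | 0, a, c, l => by simp [bp_cons_cons]
  | (m+1), a, c, l => by
    have := bp_rep_cons m a c l
    rw [List.replicate_succ, List.cons_append, List.replicate_succ, List.cons_append,
      bp_cons_cons, ← List.cons_append, ← List.replicate_succ]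
    simp [this]

theorem bp_rep : ∀ (m : ℕ) (a : ℕ) (z : List ℕ),
    bp (List.replicate (m+1) a ++ z) = bp (a :: z) := by
  intro m a z
  cases z with
  | nil => induction m with
    | zero => simp
    | succ m ih => rw [List.replicate_succ, List.append_nil] at *
                   rw [List.replicate_succ, bp_cons_cons]; simp [ih]
  | cons c z' => rw [bp_rep_cons, bp_cons_cons]

theorem bp_zero : ∀ (s : List ℕ), bp s = 0 → ∃ a q, s = List.replicate q a
  | [], _ => ⟨0, 0, rfl⟩
  | [x], _ => ⟨x, 1, rfl⟩
  | x :: y :: l, h => by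
    rw [bp_cons_cons] at h
    have hxy : x = y := by by_contra hc; simp [hc] at h
    obtain ⟨a, q, hq⟩ := bp_zero (y :: l) (by omega)
    cases q with
    | zero => simp at hq
    | succ q' =>
      rw [List.replicate_succ] at hq
      have : y = a := (List.cons.injEq _ _ _ _).mp hq |>.1
      refine ⟨a, q' + 2, ?_⟩
      rw [List.replicate_succ, List.replicate_succ, ← hq, hxy, this]

theorem extract1 : ∀ (s : List ℕ), 1 ≤ bp s →
    ∃ b c q z, b ≠ c ∧ s = List.replicate (q+1) b ++ c :: z
  | [], h => by simp at h
  | [x], h => by simp at h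
  | x :: y :: l, h => by
    by_cases hxy : x = y
    · rw [bp_cons_cons, if_pos hxy] at h
      obtain ⟨b, c, q, z, hbc, hs⟩ := extract1 (y :: l) (by omega)
      have hy : y = b := by
        rw [List.replicate_succ, List.cons_append] at hs
        exact (List.cons.injEq _ _ _ _).mp hs |>.1
      refine ⟨b, c, q + 1, z, hbc, ?_⟩
      rw [List.replicate_succ, List.cons_append, ← hs, hxy, hy]
    · exact ⟨x, y, 0, l, hxy, by simp⟩

theorem extract2 : ∀ (s : List ℕ), (∀ x ∈ s, x < 2) → 2 ≤ bp s →
    ∃ a b p q z, a ≠ b ∧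
      s = List.replicate (p+1) a ++ List.replicate (q+1) b ++ a :: z
  | [], _, h => by simp at h
  | [x], _, h => by simp at h
  | x :: y :: l, hb, h => by
    by_cases hxy : x = y
    · rw [bp_cons_cons, if_pos hxy] at h
      obtain ⟨a, b, p, q, z, hab, hs⟩ := extract2 (y :: l)
        (fun u hu => hb u (List.mem_cons_of_mem x hu)) (by omega)
      have hy : y = a := by
        rw [List.replicate_succ, List.cons_append, List.cons_append] at hs
        exact (List.cons.injEq _ _ _ _).mp hs |>.1
      refine ⟨a, b, p + 1, q, z, hab, ?_⟩
      rw [hs, hxy, hy]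
      simp [List.replicate_succ]
    · rw [bp_cons_cons, if_neg hxy] at h
      obtain ⟨b, c, q, z, hbc, hs⟩ := extract1 (y :: l) (by omega)
      have hy : y = b := by
        rw [List.replicate_succ, List.cons_append] at hs
        exact (List.cons.injEq _ _ _ _).mp hs |>.1
      have hcx : c = x := by
        have hx2 : x < 2 := hb x (by simp)
        have hc2 : c < 2 := by
          refine hb c ?_
          rw [List.mem_cons, hs]
          right; exact List.mem_append_right _ (by simp)
        have hb2 : b < 2 := by
          refine hb b ?_
          rw [List.mem_cons, hs]
          right; exact List.mem_append_left _ (by simp)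
        subst hy; omega
      refine ⟨x, b, 0, q, z, by rw [← hy]; exact hxy, ?_⟩
      rw [hs, hcx]
      simp [List.replicate_succ]

theorem two_blocks_of_bp_le_one (s : List ℕ) (h : bp s ≤ 1) :
    ∃ a b p q, s = List.replicate p a ++ List.replicate q b := by
  rcases Nat.lt_or_ge (bp s) 1 with h0 | h1
  · obtain ⟨a, q, hq⟩ := bp_zero s (by omega)
    exact ⟨a, a, q, 0, by simp [hq]⟩
  · obtain ⟨b, c, q, z, hbc, hs⟩ := extract1 s h1
    have hb : bp s = bp (c :: z) + 1 := by rw [hs, bp_rep_cons, if_neg hbc]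
    obtain ⟨a, q', hq'⟩ := bp_zero (c :: z) (by omega)
    exact ⟨b, a, q + 1, q', by rw [hs, hq']⟩

theorem grouped_two_blocks (p q a b : ℕ) :
    Grouped (List.replicate p a ++ List.replicate q b) := by
  intro i j l hij hjl heq
  have h1 : (i : ℕ) < (j : ℕ) := hij
  have h2 : (j : ℕ) < (l : ℕ) := hjl
  have hget : ∀ k : Fin (List.replicate p a ++ List.replicate q b).length,
      (List.replicate p a ++ List.replicate q b).get k = if (k : ℕ) < p then a else b := by
    intro k
    have hk := k.isLt
    simp only [List.length_append, List.length_replicate] at hk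
    rcases Nat.lt_or_ge (k : ℕ) p with h | h
    · rw [List.get_eq_getElem, if_pos h, List.getElem_append_left (by simpa using h),
        List.getElem_replicate]
    · rw [List.get_eq_getElem, if_neg (by omega), List.getElem_append_right (by simpa using h),
        List.getElem_replicate]
  rw [hget i, hget l] at heq
  rw [hget j, hget i]
  split_ifs at heq ⊢ <;> first | rfl | omega | exact heq.symm | exact heq

theorem grouped_of_bp_le_one (s : List ℕ) (h : bp s ≤ 1) : Grouped s := by
  obtain ⟨a, b, p, q, hs⟩ := two_blocks_of_bp_le_one s h
  rw [hs]
  exact grouped_two_blocks p q a b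

theorem grouped_bp_le_one (t : List ℕ) (hb : ∀ x ∈ t, x < 2) (hg : Grouped t) : bp t ≤ 1 := by
  by_contra hc
  obtain ⟨a, b, p, q, z, hab, ht⟩ := extract2 t hb (by omega)
  subst ht
  set t := List.replicate (p + 1) a ++ List.replicate (q + 1) b ++ a :: z with ht
  have hlen : t.length = (p + 1) + ((q + 1) + (1 + z.length)) := by simp [ht]; ring
  have hi : 0 < t.length := by omega
  have hj : p + 1 < t.length := by omega
  have hl : p + q + 2 < t.length := by omega
  have hvi : t.get ⟨0, hi⟩ = a := by
    simp only [List.get_eq_getElem, ht]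
    rw [List.getElem_append_left (by simp), List.getElem_append_left (by simp),
      List.getElem_replicate]
  have hvj : t.get ⟨p + 1, hj⟩ = b := by
    simp only [List.get_eq_getElem, ht]
    rw [List.getElem_append_left (by simp only [List.length_append, List.length_replicate]; omega),
      List.getElem_append_right (by simp only [List.length_replicate]; omega)]
    simp
  have hvl : t.get ⟨p + q + 2, hl⟩ = a := by
    simp only [List.get_eq_getElem, ht]
    rw [List.getElem_append_right (by simp only [List.length_append, List.length_replicate]; omega)]
    simp [show p + q + 2 - (p + 1 + (q + 1)) = 0 from by omega]
  have := hg ⟨0, hi⟩ ⟨p + 1, hj⟩ ⟨p + q + 2, hl⟩ (Fin.mk_lt_mk.mpr (by omega))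
    (Fin.mk_lt_mk.mpr (by omega)) (by rw [hvi, hvl])
  rw [hvi, hvj] at this
  exact hab this.symm

theorem pflip_perm (i : ℕ) (s : List ℕ) : (pflip i s).Perm s := by
  unfold pflip
  have h1 : ((s.take i).reverse ++ s.drop i).Perm (s.take i ++ s.drop i) :=
    (s.take i).reverse_perm.append_right _
  rwa [List.take_append_drop] at h1

theorem flip_bp {s t : List ℕ} (h : FlipStep s t) : bp s ≤ bp t + 1 := by
  obtain ⟨i, _, _, ht⟩ := h
  have h1 : bp s ≤ bp (s.take i) + bp (s.drop i) + 1 := by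
    conv_lhs => rw [← List.take_append_drop i s]
    exact bp_append_le _ _
  have h2 : bp (s.take i) + bp (s.drop i) ≤ bp t := by
    rw [ht]
    unfold pflip
    have := bp_le_append (s.take i).reverse (s.drop i)
    rwa [bp_reverse] at this
  omega

theorem reach_bp : ∀ (m : ℕ) (s t : List ℕ), ReachIn m s t → bp s ≤ bp t + m
  | 0, s, t, h => by rw [show s = t from h]; omega
  | (m+1), s, t, ⟨u, hf, hr⟩ => by
    have h1 := flip_bp hf
    have h2 := reach_bp m u t hr
    omega

theorem reach_perm : ∀ (m : ℕ) (s t : List ℕ), ReachIn m s t → s.Perm t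
  | 0, s, t, h => by rw [show s = t from h]
  | (m+1), s, t, ⟨u, hf, hr⟩ => by
    obtain ⟨i, _, _, hu⟩ := hf
    exact ((hu ▸ pflip_perm i s).symm).trans (reach_perm m u t hr)

theorem bp_norm : ∀ s : List ℕ, Normalized s → bp s = s.length - 1
  | [] , _ => rfl
  | [a], _ => rfl
  | a :: b :: l, h => by
    rw [Normalized, List.Chain', List.isChain_cons_cons] at h
    have := bp_norm (b :: l) h.2
    rw [bp_cons_cons, if_neg h.1, this]
    simp

theorem upper : ∀ (m : ℕ) (s : List ℕ), bp s < m → (∀ x ∈ s, x < 2) →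
    ∃ t, Grouped t ∧ ReachIn (bp s - 1) s t
  | 0, s, h, _ => absurd h (by omega)
  | (m+1), s, h, hbin => by
    rcases Nat.lt_or_ge (bp s) 2 with h1 | h1
    · refine ⟨s, grouped_of_bp_le_one s (by omega), ?_⟩
      have : bp s - 1 = 0 := by omega
      rw [this]
      rfl
    · obtain ⟨a, b, p, q, z, hab, hs⟩ := extract2 s hbin h1
      set u := List.replicate (q+1) b ++ List.replicate (p+2) a ++ z with hu
      have hflip : FlipStep s u := by
        refine ⟨p + q + 2,
          by omega,
          by simp only [hs, List.length_append, List.length_replicate, List.length_cons]; omega,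
          ?_⟩
        unfold pflip
        rw [hs]
        rw [List.take_left' (show (List.replicate (p+1) a ++ List.replicate (q+1) b).length
              = p + q + 2 from by simp only [List.length_append, List.length_replicate]; omega),
          List.drop_left' (show (List.replicate (p+1) a ++ List.replicate (q+1) b).length
              = p + q + 2 from by simp only [List.length_append, List.length_replicate]; omega)]
        rw [List.reverse_append, List.reverse_replicate, List.reverse_replicate, hu]
        simp [List.replicate_succ', List.append_assoc]
      have hbps : bp s = bp (a :: z) + 2 := by
        rw [hs, List.append_assoc]
        rw [show List.replicate (q+1) b ++ a :: z
            = b :: (List.replicate q b ++ a :: z) from by simp [List.replicate_succ]]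
        rw [bp_rep_cons, if_neg hab]
        rw [show b :: (List.replicate q b ++ a :: z)
            = List.replicate (q+1) b ++ a :: z from by simp [List.replicate_succ]]
        rw [bp_rep_cons, if_neg (Ne.symm hab)]
      have hbpu : bp u = bp (a :: z) + 1 := by
        rw [hu, List.append_assoc]
        rw [show List.replicate (p+2) a ++ z
            = a :: (List.replicate (p+1) a ++ z) from by simp [List.replicate_succ]]
        rw [bp_rep_cons, if_neg (Ne.symm hab)]
        rw [show a :: (List.replicate (p+1) a ++ z)
            = List.replicate (p+1+1) a ++ z from by simp [List.replicate_succ]]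
        rw [bp_rep]
      have hbinu : ∀ x ∈ u, x < 2 := by
        intro x hx
        obtain ⟨i, _, _, hpu⟩ := hflip
        exact hbin x ((pflip_perm i s).mem_iff.mp (hpu ▸ hx) |> id)
      obtain ⟨t, hgt, hrt⟩ := upper m u (by omega) hbinu
      refine ⟨t, hgt, ?_⟩
      have : bp s - 1 = (bp u - 1) + 1 := by omega
      rw [this]
      exact ⟨u, hflip, hrt⟩

theorem grouping_binary (n : ℕ) (s : List ℕ)
    (hlen : s.length = n) (hfull : FullyKary 2 s) (hnorm : Normalized s) :
    groupDist s = n - 2 := by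
  have hbin : ∀ x ∈ s, x < 2 := fun x hx => (hfull x).mp hx
  have h0 : (0:ℕ) ∈ s := (hfull 0).mpr (by omega)
  have h1 : (1:ℕ) ∈ s := (hfull 1).mpr (by omega)
  have hn2 : 2 ≤ n := by
    rw [← hlen]
    rcases s with _ | ⟨x, _ | ⟨y, l⟩⟩
    · simp at h0
    · simp at h0 h1; omega
    · simp
  have hbp : bp s = n - 1 := by rw [bp_norm s hnorm, hlen]
  obtain ⟨t, hgt, hrt⟩ := upper (bp s + 1) s (by omega) hbin
  have hmem : (n - 2) ∈ {m | ∃ t, Grouped t ∧ ReachIn m s t} := by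
    refine ⟨t, hgt, ?_⟩
    have heq : bp s - 1 = n - 2 := by omega
    rwa [heq] at hrt
  have hlow : ∀ m ∈ {m | ∃ t, Grouped t ∧ ReachIn m s t}, n - 2 ≤ m := by
    rintro m ⟨t, hgt, hrt⟩
    have hb := reach_bp m s t hrt
    have hperm := reach_perm m s t hrt
    have hbt : ∀ x ∈ t, x < 2 := fun x hx => hbin x (hperm.mem_iff.mpr hx)
    have := grouped_bp_le_one t hbt hgt
    omega
  exact le_antisymm (Nat.sInf_le hmem) (le_csInf ⟨_, hmem⟩ hlow)
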